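/- Let ρ, a, b, c, ã, b̃ : ℝ → ℝ be differentiable functions satisfying for all t: (ρc)' = 2ρ ã b; (ρ(c + b² − a²))' = −2ρ b̃ a; (ρ(c + b²))' = 2ρ(b̃ a − ã b); (ρ a b)' = ρ(b b̃ − a ã); (ρ a)' = ρ(b̃(1 − a²) + ã a b); (ρ b)' = −ρ(ã(1 − b²) + b̃ a b). Assume moreover that ρ(t) ≠ 0 and a(t)² ≠ b(t)² for all t. Then for all t: a(t)·b̃(t) = b(t)·ã(t), ρ'(t) = 0 (so ρ is constant), a'(t) = b̃(t), b'(t) = −ã(t), and the functions a² + b² and c + b² are constant. -/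

import Mathlib

/- STATEMENT 16: The six ODEs coming from the multiplier condition in the
three-dimensional example imply a·b̃ = b·ã, ρ' = 0 (ρ constant), a' = b̃,
b' = −ã, and the constancy of a² + b² and c + b². -/
theorem three_dim_multiplier_ode_consequences
    (ρ a b c atil btil : ℝ → ℝ)
    (hρ : Differentiable ℝ ρ) (ha : Differentiable ℝ a)
    (hb : Differentiable ℝ b) (hc : Differentiable ℝ c)
    (hatil : Differentiable ℝ atil) (hbtil : Differentiable ℝ btil)
    (h1 : ∀ t, deriv (fun s => ρ s * c s) t = 2 * ρ t * atil t * b t)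
    (h2 : ∀ t, deriv (fun s => ρ s * (c s + b s ^ 2 - a s ^ 2)) t
      = -2 * ρ t * btil t * a t)
    (h3 : ∀ t, deriv (fun s => ρ s * (c s + b s ^ 2)) t
      = 2 * ρ t * (btil t * a t - atil t * b t))
    (h4 : ∀ t, deriv (fun s => ρ s * a s * b s) t
      = ρ t * (b t * btil t - a t * atil t))
    (h5 : ∀ t, deriv (fun s => ρ s * a s) t
      = ρ t * (btil t * (1 - a t ^ 2) + atil t * a t * b t))
    (h6 : ∀ t, deriv (fun s => ρ s * b s) t
      = -(ρ t * (atil t * (1 - b t ^ 2) + btil t * a t * b t)))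
    (hρne : ∀ t, ρ t ≠ 0) (hab : ∀ t, a t ^ 2 ≠ b t ^ 2) :
    (∀ t, a t * btil t = b t * atil t)
    ∧ (∀ t, deriv ρ t = 0) ∧ (∀ s t, ρ s = ρ t)
    ∧ (∀ t, deriv a t = btil t)
    ∧ (∀ t, deriv b t = -atil t)
    ∧ (∀ s t, a s ^ 2 + b s ^ 2 = a t ^ 2 + b t ^ 2)
    ∧ (∀ s t, c s + b s ^ 2 = c t + b t ^ 2) := by
  have key : ∀ t, deriv ρ t = 0 ∧ a t * btil t = b t * atil t ∧ deriv a t = btil t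
      ∧ deriv b t = -atil t ∧ deriv c t + 2 * b t * deriv b t = 0 := by
    intro t
    have Dρ := (hρ t).hasDerivAt
    have Da := (ha t).hasDerivAt
    have Db := (hb t).hasDerivAt
    have Dc := (hc t).hasDerivAt
    have e1 := h1 t
    rw [HasDerivAt.deriv (f := fun s => ρ s * c s) (Dρ.mul Dc)] at e1
    have E2 : HasDerivAt (fun s => ρ s * (c s + b s ^ 2 - a s ^ 2))
        (deriv ρ t * (c t + b t ^ 2 - a t ^ 2)
          + ρ t * (deriv c t + 2 * b t * deriv b t - 2 * a t * deriv a t)) t := by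
      have h : HasDerivAt (fun s => ρ s * (c s + b s ^ 2 - a s ^ 2)) _ t := Dρ.mul ((Dc.add (Db.pow 2)).sub (Da.pow 2))
      convert h using 1
      push_cast; ring
    have e2 := h2 t
    rw [E2.deriv] at e2
    have E3 : HasDerivAt (fun s => ρ s * (c s + b s ^ 2))
        (deriv ρ t * (c t + b t ^ 2)
          + ρ t * (deriv c t + 2 * b t * deriv b t)) t := by
      have h : HasDerivAt (fun s => ρ s * (c s + b s ^ 2)) _ t := Dρ.mul (Dc.add (Db.pow 2))
      convert h using 1
      push_cast; ring
    have e3 := h3 t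
    rw [E3.deriv] at e3
    have e5 := h5 t
    rw [HasDerivAt.deriv (f := fun s => ρ s * a s) (Dρ.mul Da)] at e5
    have e6 := h6 t
    rw [HasDerivAt.deriv (f := fun s => ρ s * b s) (Dρ.mul Db)] at e6
    set r := ρ t
    set A := a t
    set B := b t
    set At := atil t
    set Bt := btil t
    set X := deriv ρ t
    have hr := hρne t
    have EA : X * A ^ 2 + 2 * (1 + A ^ 2) * (r * (A * Bt - B * At)) = 0 := by
      linear_combination (e2 - e3) + 2 * A * e5
    have EB : X * B ^ 2 + 2 * (1 + B ^ 2) * (r * (A * Bt - B * At)) = 0 := by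
      linear_combination (e1 - e3) + 2 * B * e6
    have hsum : (X + 2 * (r * (A * Bt - B * At))) * (A ^ 2 - B ^ 2) = 0 := by
      linear_combination EA - EB
    have hX2P : X = -(2 * (r * (A * Bt - B * At))) := by
      rcases mul_eq_zero.mp hsum with h | h
      · linarith
      · exact absurd (sub_eq_zero.mp h) (hab t)
    have hP : r * (A * Bt - B * At) = 0 := by
      linear_combination (EA - A ^ 2 * hX2P) / 2
    have hX : X = 0 := by linear_combination hX2P - 2 * hP
    have habt : A * Bt = B * At := by
      have := (mul_eq_zero.mp hP).resolve_left hr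
      linarith [sub_eq_zero.mp this]
    have hA' : deriv a t = Bt := by
      have h : r * (deriv a t - Bt) = 0 := by
        linear_combination e5 - A * hX - A * hP
      have := (mul_eq_zero.mp h).resolve_left hr
      linarith [sub_eq_zero.mp this]
    have hB' : deriv b t = -At := by
      have h : r * (deriv b t + At) = 0 := by
        linear_combination e6 - B * hX - B * hP
      have := (mul_eq_zero.mp h).resolve_left hr
      linarith
    have hC' : deriv c t + 2 * B * deriv b t = 0 := by
      have h : r * (deriv c t + 2 * B * deriv b t) = 0 := by
        linear_combination e3 - (c t + B ^ 2) * hX + 2 * hP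
      exact (mul_eq_zero.mp h).resolve_left hr
    exact ⟨hX, habt, hA', hB', hC'⟩
  have hρ0 : ∀ t, deriv ρ t = 0 := fun t => (key t).1
  have habP : ∀ t, a t * btil t = b t * atil t := fun t => (key t).2.1
  have hA' : ∀ t, deriv a t = btil t := fun t => (key t).2.2.1
  have hB' : ∀ t, deriv b t = -atil t := fun t => (key t).2.2.2.1
  refine ⟨habP, hρ0, fun s t => is_const_of_deriv_eq_zero hρ hρ0 s t, hA', hB', ?_, ?_⟩
  · have hdiff : Differentiable ℝ (fun t => a t ^ 2 + b t ^ 2) :=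
      (ha.pow 2).add (hb.pow 2)
    have hzero : ∀ t, deriv (fun t => a t ^ 2 + b t ^ 2) t = 0 := by
      intro t
      have D : HasDerivAt (fun t => a t ^ 2 + b t ^ 2)
          (2 * a t * deriv a t + 2 * b t * deriv b t) t := by
        have h : HasDerivAt (fun t => a t ^ 2 + b t ^ 2) _ t := ((ha t).hasDerivAt.pow 2).add ((hb t).hasDerivAt.pow 2)
        convert h using 1
        push_cast; ring
      rw [D.deriv, hA' t, hB' t]
      linear_combination 2 * habP t
    exact fun s t => is_const_of_deriv_eq_zero hdiff hzero s t
  · have hdiff : Differentiable ℝ (fun t => c t + b t ^ 2) := hc.add (hb.pow 2)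
    have hzero : ∀ t, deriv (fun t => c t + b t ^ 2) t = 0 := by
      intro t
      have D : HasDerivAt (fun t => c t + b t ^ 2)
          (deriv c t + 2 * b t * deriv b t) t := by
        have h : HasDerivAt (fun t => c t + b t ^ 2) _ t := (hc t).hasDerivAt.add ((hb t).hasDerivAt.pow 2)
        convert h using 1
        push_cast; ring
      rw [D.deriv]
      exact (key t).2.2.2.2
    exact fun s t => is_const_of_deriv_eq_zero hdiff hzero s t
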